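/- Let d ≥ 2 and let ω : [0,∞) → [0,∞) be continuous, strictly increasing, convex, with ω(0) = 0, such that r ↦ ω(r)/r^d is monotone decreasing on (0,∞). Suppose (r_n)_{n ≥ n₀} is a sequence of positive reals with ω(r_n) = 2^{−(n+1)} for every n ≥ n₀. Then ∑_{n ≥ n₀} 2^{n/d} r_n < ∞ if and only if ∫_0^1 ω(r)^{−1/d} dr < ∞. -/

import Mathlib

open MeasureTheory Set ENNReal NNReal

/-- Auxiliary lemma: the reindexed statement with a clean sequence `s`. -/
theorem summable_iff_integral_finite_aux (d : ℕ) (hd : 2 ≤ d) (ω : ℝ → ℝ)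
    (hω_cont : ContinuousOn ω (Ici (0 : ℝ)))
    (hω_mono : StrictMonoOn ω (Ici (0 : ℝ)))
    (hω_conv : ConvexOn ℝ (Ici (0 : ℝ)) ω)
    (hω_zero : ω 0 = 0)
    (hω_dec : AntitoneOn (fun t : ℝ => ω t / t ^ d) (Ioi (0 : ℝ)))
    (n₀ : ℕ) (s : ℕ → ℝ)
    (hs_pos : ∀ n, 0 < s n)
    (hωs : ∀ n, ω (s n) = 2 ^ (-(((n + n₀ : ℕ) : ℝ) + 1))) :
    (Summable fun n : ℕ => (2 : ℝ) ^ (((n + n₀ : ℕ) : ℝ) / d) * s n) ↔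
      ∫⁻ t in Ioc (0 : ℝ) 1, ENNReal.ofReal (ω t ^ (-(1 / (d : ℝ)))) < ⊤ := by
  classical
  set D : ℝ := (d : ℝ) with hD_def
  have hD : 0 < D := by
    have h0 : 0 < d := by omega
    rw [hD_def]
    exact_mod_cast h0
  have hDne : D ≠ 0 := hD.ne'
  set K : ℕ → ℝ := fun n => (n : ℝ) + n₀ with hK_def
  have hωs' : ∀ n, ω (s n) = 2 ^ (-(K n + 1)) := by
    intro n
    rw [hωs n]
    congr 1
    simp only [hK_def]
    push_cast
    ring
  have hKsucc : ∀ n, K (n + 1) = K n + 1 := by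
    intro n; simp only [hK_def]; push_cast; ring
  -- strict antitonicity of s
  have hanti : ∀ n, s (n + 1) < s n := by
    intro n
    have h1 : ω (s (n + 1)) < ω (s n) := by
      rw [hωs', hωs', hKsucc]
      exact (Real.rpow_lt_rpow_left_iff one_lt_two).mpr (by linarith)
    exact (hω_mono.lt_iff_lt (mem_Ici.mpr (hs_pos _).le) (mem_Ici.mpr (hs_pos _).le)).mp h1
  have hsanti : StrictAnti s := strictAnti_nat_of_succ_lt hanti
  -- convexity slope: for 0 < x ≤ y, ω x * y ≤ ω y * x
  have slope : ∀ x y : ℝ, 0 < x → x ≤ y → ω x * y ≤ ω y * x := by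
    intro x y hx hxy
    have hy : 0 < y := hx.trans_le hxy
    have ha : (0:ℝ) ≤ x / y := by positivity
    have hb : (0:ℝ) ≤ 1 - x / y := by
      have : x / y ≤ 1 := (div_le_one hy).mpr hxy
      linarith
    have h1 := hω_conv.2 (mem_Ici.mpr hy.le) (mem_Ici.mpr (le_refl (0:ℝ))) ha hb (by ring)
    rw [smul_eq_mul, smul_eq_mul, smul_eq_mul, smul_eq_mul, mul_zero, add_zero,
      div_mul_cancel₀ _ hy.ne', hω_zero, mul_zero, add_zero] at h1
    -- h1 : ω x ≤ x / y * ω y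
    have h2 := mul_le_mul_of_nonneg_right h1 hy.le
    calc ω x * y ≤ x / y * ω y * y := h2
      _ = ω y * x := by field_simp
  -- upper ratio: s n ≤ 2 * s (n+1)
  have hub : ∀ n, s n ≤ 2 * s (n + 1) := by
    intro n
    have h := slope (s (n + 1)) (s n) (hs_pos _) (hanti n).le
    rw [hωs', hωs', hKsucc] at h
    have hp : (0:ℝ) < 2 ^ (-(K n + 1 + 1)) := Real.rpow_pos_of_pos two_pos _
    have key : (2:ℝ) ^ (-(K n + 1)) = 2 * 2 ^ (-(K n + 1 + 1)) := by
      rw [show (-(K n + 1)) = 1 + -(K n + 1 + 1) by ring, Real.rpow_add two_pos,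
        Real.rpow_one]
    rw [key] at h
    have h' : (2:ℝ) ^ (-(K n + 1 + 1)) * s n ≤ 2 ^ (-(K n + 1 + 1)) * (2 * s (n + 1)) := by
      nlinarith [h]
    exact le_of_mul_le_mul_left h' hp
  -- lower ratio: 2 * s (n+1) ^ d ≤ s n ^ d
  have hlb : ∀ n, 2 * s (n + 1) ^ d ≤ s n ^ d := by
    intro n
    have h := hω_dec (mem_Ioi.mpr (hs_pos (n + 1))) (mem_Ioi.mpr (hs_pos n)) (hanti n).le
    simp only at h
    rw [hωs', hωs', hKsucc] at h
    have hd1 : (0:ℝ) < s n ^ d := pow_pos (hs_pos n) d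
    have hd2 : (0:ℝ) < s (n + 1) ^ d := pow_pos (hs_pos (n + 1)) d
    rw [div_le_div_iff₀ hd1 hd2] at h
    -- h : 2 ^ (-(K n + 1)) * s (n+1) ^ d ≤ 2 ^ (-(K n + 1 + 1)) * s n ^ d
    have hp : (0:ℝ) < 2 ^ (-(K n + 1 + 1)) := Real.rpow_pos_of_pos two_pos _
    have key : (2:ℝ) ^ (-(K n + 1)) = 2 * 2 ^ (-(K n + 1 + 1)) := by
      rw [show (-(K n + 1)) = 1 + -(K n + 1 + 1) by ring, Real.rpow_add two_pos,
        Real.rpow_one]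
    rw [key] at h
    have h' : (2:ℝ) ^ (-(K n + 1 + 1)) * (2 * s (n + 1) ^ d) ≤
        2 ^ (-(K n + 1 + 1)) * s n ^ d := by nlinarith [h]
    exact le_of_mul_le_mul_left h' hp
  -- the geometric ratio bound: s (n+1) ≤ 2 ^ (-(1/D)) * s n
  have hq : (0:ℝ) < 2 ^ (-(1 / D)) := Real.rpow_pos_of_pos two_pos _
  have hq1 : (2:ℝ) ^ (-(1 / D)) < 1 :=
    Real.rpow_lt_one_of_one_lt_of_neg one_lt_two (neg_lt_zero.mpr (div_pos one_pos hD))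
  have hratio : ∀ n, s (n + 1) ≤ 2 ^ (-(1 / D)) * s n := by
    intro n
    have hn1 : (0:ℝ) ≤ s (n + 1) := (hs_pos _).le
    have hn2 : (0:ℝ) ≤ 2 ^ (-(1 / D)) * s n := mul_nonneg hq.le (hs_pos n).le
    rw [← pow_le_pow_iff_left₀ hn1 hn2 (by omega : d ≠ 0)]
    have hrhs : (2 ^ (-(1 / D)) * s n) ^ d = 2 ^ (-(1 / D) * D) * s n ^ d := by
      rw [mul_pow, ← Real.rpow_natCast (2 ^ (-(1 / D))) d, ← Real.rpow_mul two_pos.le]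
    rw [hrhs, show (-(1 / D) * D) = -1 by field_simp, Real.rpow_neg_one]
    have := hlb n
    nlinarith [pow_pos (hs_pos (n+1)) d, pow_pos (hs_pos n) d]
  -- s tends to 0
  have hdecay : ∀ n, s n ≤ (2 ^ (-(1 / D))) ^ n * s 0 := by
    intro n
    induction n with
    | zero => simp
    | succ n ih =>
      calc s (n + 1) ≤ 2 ^ (-(1 / D)) * s n := hratio n
        _ ≤ 2 ^ (-(1 / D)) * ((2 ^ (-(1 / D))) ^ n * s 0) :=
            mul_le_mul_of_nonneg_left ih hq.le
        _ = (2 ^ (-(1 / D))) ^ (n + 1) * s 0 := by ring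
  have htends : Filter.Tendsto s Filter.atTop (nhds 0) := by
    have hgeo : Filter.Tendsto (fun n : ℕ => (2 ^ (-(1 / D))) ^ n * s 0)
        Filter.atTop (nhds 0) := by
      have := (tendsto_pow_atTop_nhds_zero_of_lt_one hq.le hq1).mul_const (s 0)
      simpa using this
    exact tendsto_of_tendsto_of_tendsto_of_le_of_le tendsto_const_nhds hgeo
      (fun n => (hs_pos n).le) hdecay
  -- union decomposition of (0, s 0]
  have hUnion : Ioc (0:ℝ) (s 0) = ⋃ n, Ioc (s (n + 1)) (s n) := by
    ext t
    simp only [mem_Ioc, mem_iUnion]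
    constructor
    · rintro ⟨ht0, hts⟩
      have hne : ∃ n, s n < t := (htends.eventually (gt_mem_nhds ht0)).exists
      have hN : s (Nat.find hne) < t := Nat.find_spec hne
      have hN0 : Nat.find hne ≠ 0 := by
        intro h
        rw [h] at hN
        exact absurd hts (not_le.mpr hN)
      obtain ⟨M, hM⟩ := Nat.exists_eq_succ_of_ne_zero hN0
      refine ⟨M, ?_, ?_⟩
      · have hlt := hN
        rw [hM] at hlt
        exact hlt
      · exact le_of_not_gt (Nat.find_min hne (by omega))
    · rintro ⟨n, h1, h2⟩
      exact ⟨(hs_pos (n + 1)).trans h1, h2.trans (hsanti.antitone (Nat.zero_le n))⟩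
  have hdisj : Pairwise (Function.onFun Disjoint fun n => Ioc (s (n + 1)) (s n)) := by
    have key : ∀ m n : ℕ, m < n → Disjoint (Ioc (s (m + 1)) (s m)) (Ioc (s (n + 1)) (s n)) := by
      intro m n h
      rw [Set.Ioc_disjoint_Ioc]
      exact le_max_of_le_left ((min_le_right _ _).trans (hsanti.antitone (by omega : m + 1 ≤ n)))
    intro m n hmn
    rcases hmn.lt_or_gt with h | h
    · exact key m n h
    · exact (key n m h).symm
  have hK' : ∫⁻ t in Ioc (0:ℝ) (s 0), ENNReal.ofReal (ω t ^ (-(1 / D))) =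
      ∑' n, ∫⁻ t in Ioc (s (n + 1)) (s n), ENNReal.ofReal (ω t ^ (-(1 / D))) := by
    rw [hUnion, lintegral_iUnion (fun n => measurableSet_Ioc) hdisj]
  -- finiteness of integral over Ioc x y for x > 0
  have hfin : ∀ x y : ℝ, 0 < x →
      (∫⁻ t in Ioc x y, ENNReal.ofReal (ω t ^ (-(1 / D)))) < ⊤ := by
    intro x y hx
    have hωx : 0 < ω x := by
      rw [← hω_zero]
      exact hω_mono (mem_Ici.mpr le_rfl) (mem_Ici.mpr hx.le) hx
    have hbound : ∫⁻ t in Ioc x y, ENNReal.ofReal (ω t ^ (-(1 / D))) ≤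
        ∫⁻ _ in Ioc x y, ENNReal.ofReal (ω x ^ (-(1 / D))) := by
      apply setLIntegral_mono_ae' measurableSet_Ioc
      filter_upwards with t ht
      apply ENNReal.ofReal_le_ofReal
      have hle : ω x ≤ ω t :=
        (hω_mono (mem_Ici.mpr hx.le) (mem_Ici.mpr (hx.trans ht.1).le) ht.1).le
      exact Real.rpow_le_rpow_of_nonpos hωx hle (neg_nonpos.mpr (div_nonneg one_pos.le hD.le))
    refine lt_of_le_of_lt hbound ?_
    rw [setLIntegral_const, Real.volume_Ioc]
    exact ENNReal.mul_lt_top ENNReal.ofReal_lt_top ENNReal.ofReal_lt_top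
  -- the series terms
  set a : ℕ → ℝ := fun n => (2 : ℝ) ^ (((n + n₀ : ℕ) : ℝ) / D) * s n with ha_def
  have ha_eq : ∀ n, a n = 2 ^ (K n / D) * s n := by
    intro n
    simp only [ha_def, hK_def]
    push_cast
    ring_nf
  have ha_pos : ∀ n, 0 < a n := by
    intro n
    rw [ha_eq n]
    exact mul_pos (Real.rpow_pos_of_pos two_pos _) (hs_pos n)
  have hsum_iff : Summable a ↔ (∑' n, ENNReal.ofReal (a n)) < ⊤ := by
    constructor
    · intro h
      rw [← ENNReal.ofReal_tsum_of_nonneg (fun n => (ha_pos n).le) h]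
      exact ENNReal.ofReal_lt_top
    · intro h
      have h1 : (∑' n, ((a n).toNNReal : ENNReal)) ≠ ⊤ := by
        simpa [ENNReal.ofReal] using h.ne
      have h2 := ENNReal.tsum_coe_ne_top_iff_summable.mp h1
      have h3 := NNReal.summable_coe.mpr h2
      have heq : (fun n => ((a n).toNNReal : ℝ)) = a :=
        funext fun n => Real.coe_toNNReal _ (ha_pos n).le
      rwa [heq] at h3
  -- pointwise bounds on ω on the dyadic intervals
  have hbds : ∀ n t, t ∈ Ioc (s (n + 1)) (s n) →
      (2 : ℝ) ^ (-(K n + 1 + 1)) ≤ ω t ∧ ω t ≤ 2 ^ (-(K n + 1)) := by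
    intro n t ht
    have ht0 : 0 < t := (hs_pos (n + 1)).trans ht.1
    constructor
    · rw [← hKsucc, ← hωs' (n + 1)]
      exact (hω_mono (mem_Ici.mpr (hs_pos (n + 1)).le) (mem_Ici.mpr ht0.le) ht.1).le
    · rw [← hωs' n]
      exact hω_mono.monotoneOn (mem_Ici.mpr ht0.le) (mem_Ici.mpr (hs_pos n).le) ht.2
  have hnegD : -(1 / D) ≤ 0 := neg_nonpos.mpr (div_nonneg one_pos.le hD.le)
  -- upper bound on each piece
  have hJub : ∀ n, (∫⁻ t in Ioc (s (n + 1)) (s n), ENNReal.ofReal (ω t ^ (-(1 / D)))) ≤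
      ENNReal.ofReal ((2 : ℝ) ^ (2 / D)) * ENNReal.ofReal (a n) := by
    intro n
    have step1 : (∫⁻ t in Ioc (s (n + 1)) (s n), ENNReal.ofReal (ω t ^ (-(1 / D)))) ≤
        ∫⁻ _ in Ioc (s (n + 1)) (s n), ENNReal.ofReal ((2 : ℝ) ^ ((K n + 2) / D)) := by
      apply setLIntegral_mono_ae' measurableSet_Ioc
      filter_upwards with t ht
      apply ENNReal.ofReal_le_ofReal
      have h1 := (hbds n t ht).1
      have hmono := Real.rpow_le_rpow_of_nonpos (Real.rpow_pos_of_pos two_pos _) h1 hnegD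
      calc ω t ^ (-(1 / D)) ≤ ((2 : ℝ) ^ (-(K n + 1 + 1))) ^ (-(1 / D)) := hmono
        _ = 2 ^ ((K n + 2) / D) := by
            rw [← Real.rpow_mul two_pos.le]
            congr 1
            field_simp
            ring
    refine step1.trans ?_
    rw [setLIntegral_const, Real.volume_Ioc]
    calc ENNReal.ofReal ((2 : ℝ) ^ ((K n + 2) / D)) * ENNReal.ofReal (s n - s (n + 1))
        ≤ ENNReal.ofReal ((2 : ℝ) ^ ((K n + 2) / D)) * ENNReal.ofReal (s n) := by
          gcongr
          linarith [hs_pos (n + 1)]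
      _ = ENNReal.ofReal ((2 : ℝ) ^ ((K n + 2) / D) * s n) := by
          rw [ENNReal.ofReal_mul (Real.rpow_pos_of_pos two_pos _).le]
      _ = ENNReal.ofReal ((2 : ℝ) ^ (2 / D) * a n) := by
          rw [ha_eq n]
          congr 1
          rw [show (K n + 2) / D = 2 / D + K n / D by ring, Real.rpow_add two_pos]
          ring
      _ = ENNReal.ofReal ((2 : ℝ) ^ (2 / D)) * ENNReal.ofReal (a n) :=
          ENNReal.ofReal_mul (Real.rpow_pos_of_pos two_pos _).le
  -- lower bound on each piece
  have hc : 0 < (2 : ℝ) ^ (1 / D) - 1 := by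
    have h1 : (1 : ℝ) < 2 ^ (1 / D) :=
      Real.one_lt_rpow_iff_of_pos two_pos |>.mpr (Or.inl ⟨one_lt_two, div_pos one_pos hD⟩)
    linarith
  have hJlb : ∀ n, ENNReal.ofReal ((2 : ℝ) ^ (1 / D) - 1) * ENNReal.ofReal (a n) ≤
      ∫⁻ t in Ioc (s (n + 1)) (s n), ENNReal.ofReal (ω t ^ (-(1 / D))) := by
    intro n
    have step1 : (∫⁻ _ in Ioc (s (n + 1)) (s n), ENNReal.ofReal ((2 : ℝ) ^ ((K n + 1) / D))) ≤
        ∫⁻ t in Ioc (s (n + 1)) (s n), ENNReal.ofReal (ω t ^ (-(1 / D))) := by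
      apply setLIntegral_mono_ae' measurableSet_Ioc
      filter_upwards with t ht
      apply ENNReal.ofReal_le_ofReal
      obtain ⟨h1, h2⟩ := hbds n t ht
      have hωt : 0 < ω t := lt_of_lt_of_le (Real.rpow_pos_of_pos two_pos _) h1
      have hmono := Real.rpow_le_rpow_of_nonpos hωt h2 hnegD
      calc (2 : ℝ) ^ ((K n + 1) / D) = ((2 : ℝ) ^ (-(K n + 1))) ^ (-(1 / D)) := by
            rw [← Real.rpow_mul two_pos.le]
            congr 1
            field_simp
        _ ≤ ω t ^ (-(1 / D)) := hmono
    refine le_trans ?_ step1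
    rw [setLIntegral_const, Real.volume_Ioc]
    have hgap : (1 - 2 ^ (-(1 / D))) * s n ≤ s n - s (n + 1) := by
      have h := hratio n
      nlinarith [hs_pos n]
    calc ENNReal.ofReal ((2 : ℝ) ^ (1 / D) - 1) * ENNReal.ofReal (a n)
        = ENNReal.ofReal (((2 : ℝ) ^ (1 / D) - 1) * a n) := (ENNReal.ofReal_mul hc.le).symm
      _ ≤ ENNReal.ofReal ((2 : ℝ) ^ ((K n + 1) / D) * (s n - s (n + 1))) := by
          apply ENNReal.ofReal_le_ofReal
          rw [ha_eq n]
          have halg : ((2 : ℝ) ^ (1 / D) - 1) * (2 ^ (K n / D) * s n)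
              = 2 ^ ((K n + 1) / D) * ((1 - 2 ^ (-(1 / D))) * s n) := by
            rw [show (K n + 1) / D = K n / D + 1 / D by ring, Real.rpow_add two_pos,
              Real.rpow_neg two_pos.le]
            have hne : ((2 : ℝ) ^ (1 / D)) ≠ 0 := (Real.rpow_pos_of_pos two_pos _).ne'
            field_simp
          rw [halg]
          exact mul_le_mul_of_nonneg_left hgap (Real.rpow_pos_of_pos two_pos _).le
      _ = ENNReal.ofReal ((2 : ℝ) ^ ((K n + 1) / D)) * ENNReal.ofReal (s n - s (n + 1)) :=
          ENNReal.ofReal_mul (Real.rpow_pos_of_pos two_pos _).le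
  -- compare the tsums
  have htsum_ub : (∑' n, ∫⁻ t in Ioc (s (n + 1)) (s n), ENNReal.ofReal (ω t ^ (-(1 / D)))) ≤
      ENNReal.ofReal ((2 : ℝ) ^ (2 / D)) * ∑' n, ENNReal.ofReal (a n) := by
    rw [← ENNReal.tsum_mul_left]
    exact ENNReal.tsum_le_tsum hJub
  have htsum_lb : ENNReal.ofReal ((2 : ℝ) ^ (1 / D) - 1) * (∑' n, ENNReal.ofReal (a n)) ≤
      ∑' n, ∫⁻ t in Ioc (s (n + 1)) (s n), ENNReal.ofReal (ω t ^ (-(1 / D))) := by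
    rw [← ENNReal.tsum_mul_left]
    exact ENNReal.tsum_le_tsum hJlb
  have hmain : (∑' n, ENNReal.ofReal (a n)) < ⊤ ↔
      (∫⁻ t in Ioc (0 : ℝ) (s 0), ENNReal.ofReal (ω t ^ (-(1 / D)))) < ⊤ := by
    rw [hK']
    constructor
    · intro h
      exact lt_of_le_of_lt htsum_ub (ENNReal.mul_lt_top ENNReal.ofReal_lt_top h)
    · intro h
      have h2 : ENNReal.ofReal ((2 : ℝ) ^ (1 / D) - 1) * (∑' n, ENNReal.ofReal (a n)) < ⊤ :=
        lt_of_le_of_lt htsum_lb h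
      have hc0 : ENNReal.ofReal ((2 : ℝ) ^ (1 / D) - 1) ≠ 0 := by
        simp only [ne_eq, ENNReal.ofReal_eq_zero, not_le]
        exact hc
      by_contra htop
      rw [not_lt, top_le_iff] at htop
      rw [htop, ENNReal.mul_top hc0] at h2
      exact absurd h2 (lt_irrefl ⊤)
  have hIK : (∫⁻ t in Ioc (0 : ℝ) 1, ENNReal.ofReal (ω t ^ (-(1 / D)))) < ⊤ ↔
      (∫⁻ t in Ioc (0 : ℝ) (s 0), ENNReal.ofReal (ω t ^ (-(1 / D)))) < ⊤ := by
    rcases le_total (s 0) 1 with h | h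
    · rw [show Ioc (0 : ℝ) 1 = Ioc 0 (s 0) ∪ Ioc (s 0) 1 from
        (Ioc_union_Ioc_eq_Ioc (hs_pos 0).le h).symm,
        lintegral_union measurableSet_Ioc (Ioc_disjoint_Ioc_of_le le_rfl), ENNReal.add_lt_top]
      exact and_iff_left (hfin (s 0) 1 (hs_pos 0))
    · rw [show Ioc (0 : ℝ) (s 0) = Ioc 0 1 ∪ Ioc 1 (s 0) from
        (Ioc_union_Ioc_eq_Ioc zero_le_one h).symm,
        lintegral_union measurableSet_Ioc (Ioc_disjoint_Ioc_of_le le_rfl), ENNReal.add_lt_top]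
      exact (and_iff_left (hfin 1 (s 0) one_pos)).symm
  rw [hIK, ← hmain]
  exact hsum_iff

theorem summable_iff_integral_finite (d : ℕ) (hd : 2 ≤ d) (ω : ℝ → ℝ)
    (hω_nonneg : ∀ t : ℝ, 0 ≤ t → 0 ≤ ω t)
    (hω_cont : ContinuousOn ω (Ici (0 : ℝ)))
    (hω_mono : StrictMonoOn ω (Ici (0 : ℝ)))
    (hω_conv : ConvexOn ℝ (Ici (0 : ℝ)) ω)
    (hω_zero : ω 0 = 0)
    (hω_dec : AntitoneOn (fun t : ℝ => ω t / t ^ d) (Ioi (0 : ℝ)))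
    (n₀ : ℕ) (r : ℕ → ℝ)
    (hr_pos : ∀ n, n₀ ≤ n → 0 < r n)
    (hr : ∀ n, n₀ ≤ n → ω (r n) = 2 ^ (-((n : ℝ) + 1))) :
    (Summable fun n : ℕ => (2 : ℝ) ^ (((n + n₀ : ℕ) : ℝ) / d) * r (n + n₀)) ↔
      ∫⁻ t in Ioc (0 : ℝ) 1, ENNReal.ofReal (ω t ^ (-(1 / (d : ℝ)))) < ⊤ := by
  exact summable_iff_integral_finite_aux d hd ω hω_cont hω_mono hω_conv hω_zero hω_dec n₀
    (fun n => r (n + n₀)) (fun n => hr_pos _ (Nat.le_add_left _ _))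
    (fun n => hr _ (Nat.le_add_left _ _))
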